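/- For every n ≥ 0 and every x ∈ D, setting A := K_n + σ² I_n, u := k_n(x_{n+1}), v := k_n(x), α := κ(x_{n+1}, x), and s := σ² + σ_n²(x_{n+1}), one has s > 0 and the one-step posterior-variance decrement identity σ_{n+1}²(x) = σ_n²(x) − (α − uᵀ A⁻¹ v)² / s. -/

import Mathlib

open Matrix

/-- The `n × n` kernel matrix `K_n = [κ(x_i, x_j)]` built from the first `n`
points of the sequence `xs` (zero-indexed: `xs 0 = x_1`). -/
noncomputable def kerMat {D : Type*} (κ : D → D → ℝ) (xs : ℕ → D) (n : ℕ) :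
    Matrix (Fin n) (Fin n) ℝ :=
  Matrix.of fun i j => κ (xs i) (xs j)

/-- The kernel vector `k_n(x) = [κ(x_i, x)]_{i=1}^n`. -/
noncomputable def kerVec {D : Type*} (κ : D → D → ℝ) (xs : ℕ → D) (n : ℕ) (y : D) :
    Fin n → ℝ :=
  fun i => κ (xs i) y

/-- The posterior variance
`σ_n²(x) = κ(x,x) − k_n(x)ᵀ (K_n + σ² I_n)⁻¹ k_n(x)`;
for `n = 0` this is `κ(x,x)`. -/
noncomputable def postVar {D : Type*} (κ : D → D → ℝ) (xs : ℕ → D) (σ2 : ℝ)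
    (n : ℕ) (y : D) : ℝ :=
  κ y y -
    kerVec κ xs n y ⬝ᵥ
      ((kerMat κ xs n + σ2 • (1 : Matrix (Fin n) (Fin n) ℝ))⁻¹ *ᵥ kerVec κ xs n y)


/-- One-step posterior-variance decrement identity: with
`A = K_n + σ² I_n`, `u = k_n(x_{n+1})`, `v = k_n(x)`, `α = κ(x_{n+1}, x)` and
`s = σ² + σ_n²(x_{n+1})`, one has `s > 0` and
`σ_{n+1}²(x) = σ_n²(x) − (α − uᵀ A⁻¹ v)² / s`. -/
theorem posterior_variance_decrement {D : Type*} [Nonempty D]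
    (κ : D → D → ℝ)
    (hsymm : ∀ a b : D, κ a b = κ b a)
    (hpsd : ∀ (n : ℕ) (z : Fin n → D),
      (Matrix.of fun i j => κ (z i) (z j)).PosSemidef)
    (σ2 : ℝ) (hσ2 : 0 < σ2)
    (xs : ℕ → D) (n : ℕ) (y : D) :
    0 < σ2 + postVar κ xs σ2 n (xs n) ∧
      postVar κ xs σ2 (n + 1) y =
        postVar κ xs σ2 n y -
          (κ (xs n) y -
              kerVec κ xs n (xs n) ⬝ᵥ
                ((kerMat κ xs n + σ2 • (1 : Matrix (Fin n) (Fin n) ℝ))⁻¹ *ᵥ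
                  kerVec κ xs n y)) ^ 2 /
            (σ2 + postVar κ xs σ2 n (xs n)) := by
  classical
  -- positive definiteness of the regularized kernel matrices
  have hpd : ∀ m : ℕ,
      (kerMat κ xs m + σ2 • (1 : Matrix (Fin m) (Fin m) ℝ)).PosDef := by
    intro m
    refine Matrix.PosDef.posSemidef_add (hpsd m fun i => xs i) ?_
    rw [smul_one_eq_diagonal]
    exact Matrix.PosDef.diagonal fun _ => hσ2
  set A : Matrix (Fin n) (Fin n) ℝ := kerMat κ xs n + σ2 • 1 with hAdef
  have hApd : A.PosDef := hpd n
  have hAdet : IsUnit A.det := isUnit_iff_ne_zero.2 hApd.det_pos.ne'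
  set P : Matrix (Fin n) (Fin n) ℝ := A⁻¹ with hPdef
  have hAP : A * P = 1 := Matrix.mul_nonsing_inv A hAdet
  have hPsym : Pᵀ = P := by
    have h := hApd.isHermitian.inv
    simpa [Matrix.IsHermitian, Matrix.conjTranspose_eq_transpose_of_trivial] using h
  set u : Fin n → ℝ := kerVec κ xs n (xs n) with hudef
  set v : Fin n → ℝ := kerVec κ xs n y with hvdef
  set α : ℝ := κ (xs n) y with hαdef
  set p : Fin n → ℝ := P *ᵥ u with hpdef
  set c : ℝ := κ (xs n) (xs n) with hcdef
  set q : ℝ := u ⬝ᵥ (P *ᵥ v) with hqdef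
  set d : ℝ := u ⬝ᵥ p with hddef
  set s : ℝ := c + σ2 - d with hsdef
  have hAp : A *ᵥ p = u := by
    rw [hpdef, mulVec_mulVec, hAP, one_mulVec]
  have hApe : ∀ i, (∑ k, A i k * p k) = u i := fun i => congrFun hAp i
  have hAPe : ∀ i j, (∑ k, A i k * P k j) = (1 : Matrix (Fin n) (Fin n) ℝ) i j :=
    fun i j => congrFun (congrFun hAP i) j
  have hPsym' : ∀ a b, P a b = P b a := by
    intro a b
    conv_lhs => rw [← hPsym]
    exact Matrix.transpose_apply P a b
  have hpv : p ⬝ᵥ v = q := by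
    rw [hqdef, dotProduct_mulVec, ← mulVec_transpose, hPsym]
  have hpv' : (∑ j, p j * v j) = q := hpv
  have hd' : (∑ k, u k * p k) = d := rfl
  have hPue : ∀ j, (∑ k, u k * P k j) = p j := by
    intro j
    have h1 : p j = ∑ k, P j k * u k := rfl
    rw [h1]
    exact Finset.sum_congr rfl fun k _ => by rw [hPsym' j k]; ring
  -- relate s to the posterior variance at xs n
  have hpostn : σ2 + postVar κ xs σ2 n (xs n) = s := by
    simp only [postVar, ← hAdef, ← hPdef, ← hudef, ← hcdef, ← hpdef, ← hddef, hsdef]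
    ring
  -- block structure of the (n+1)-st matrix
  set U : Matrix (Fin n) (Fin 1) ℝ := Matrix.of fun i _ => u i with hUdef
  set Cb : Matrix (Fin 1) (Fin 1) ℝ := Matrix.of fun _ _ => c + σ2 with hCbdef
  set B' : Matrix (Fin n ⊕ Fin 1) (Fin n ⊕ Fin 1) ℝ := fromBlocks A U Uᵀ Cb with hB'def
  set e : Fin n ⊕ Fin 1 ≃ Fin (n + 1) := finSumFinEquiv with hedef
  set B : Matrix (Fin (n + 1)) (Fin (n + 1)) ℝ := kerMat κ xs (n + 1) + σ2 • 1 with hBdef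
  have hval : ∀ i : Fin n, ((e (Sum.inl i) : Fin (n + 1)) : ℕ) = (i : ℕ) := by
    intro i; simp [hedef]
  have hvalr : ∀ t : Fin 1, ((e (Sum.inr t) : Fin (n + 1)) : ℕ) = n := by
    intro t; simp [hedef, Subsingleton.elim t 0]
  have hBe : B.submatrix e e = B' := by
    ext i j
    rcases i with i | i <;> rcases j with j | j
    · simp only [hB'def, fromBlocks_apply₁₁, Matrix.submatrix_apply, hBdef, hAdef,
        Matrix.add_apply, kerMat, Matrix.of_apply, Matrix.smul_apply, Matrix.one_apply,
        smul_eq_mul, hval]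
      congr 1
      by_cases h : i = j
      · simp [h]
      · have : e (Sum.inl i) ≠ e (Sum.inl j) := by
          simp only [ne_eq, EmbeddingLike.apply_eq_iff_eq, Sum.inl.injEq]; exact h
        simp [h, this]
    · simp only [hB'def, fromBlocks_apply₁₂, Matrix.submatrix_apply, hBdef,
        Matrix.add_apply, kerMat, Matrix.of_apply, Matrix.smul_apply, Matrix.one_apply,
        smul_eq_mul, hval, hvalr, hUdef, hudef, kerVec]
      have : e (Sum.inl i) ≠ e (Sum.inr j) := by
        simp only [ne_eq, EmbeddingLike.apply_eq_iff_eq]; exact fun h => by cases h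
      simp [this]
    · simp only [hB'def, fromBlocks_apply₂₁, Matrix.submatrix_apply, hBdef,
        Matrix.add_apply, kerMat, Matrix.of_apply, Matrix.smul_apply, Matrix.one_apply,
        smul_eq_mul, hval, hvalr, hUdef, hudef, kerVec, Matrix.transpose_apply]
      have : e (Sum.inr i) ≠ e (Sum.inl j) := by
        simp only [ne_eq, EmbeddingLike.apply_eq_iff_eq]; exact fun h => by cases h
      simp [this, hsymm (xs n) (xs j)]
    · simp only [hB'def, fromBlocks_apply₂₂, Matrix.submatrix_apply, hBdef,
        Matrix.add_apply, kerMat, Matrix.of_apply, Matrix.smul_apply, Matrix.one_apply,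
        smul_eq_mul, hvalr, hCbdef, hcdef, Subsingleton.elim i j]
      simp
  -- positivity of s via positive definiteness
  have hBpd : B.PosDef := hpd (n + 1)
  have hB'pd : B'.PosDef := by
    rw [← hBe]
    refine Matrix.PosDef.of_dotProduct_mulVec_pos ?_ ?_
    · have hBh := hBpd.isHermitian
      ext i j
      simp only [Matrix.conjTranspose_apply, Matrix.submatrix_apply, star_trivial]
      have := congrFun (congrFun hBh (e j)) (e i)
      simpa [Matrix.conjTranspose_apply] using this.symm
    · intro x hx
      have hx' : x ∘ e.symm ≠ 0 := by
        intro h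
        apply hx
        funext i
        have := congrFun h (e i)
        simpa using this
      have h := hBpd.dotProduct_mulVec_pos hx'
      have heq : star x ⬝ᵥ (B.submatrix e e *ᵥ x)
          = star (x ∘ e.symm) ⬝ᵥ (B *ᵥ (x ∘ e.symm)) := by
        rw [Matrix.submatrix_mulVec_equiv]
        exact Fintype.sum_equiv e _ _ (fun i => by simp)
      rw [heq]; exact h
  have hs_pos : 0 < s := by
    have hz : (Sum.elim (-p) (fun _ => (1 : ℝ)) : Fin n ⊕ Fin 1 → ℝ) ≠ 0 := by
      intro h
      have := congrFun h (Sum.inr 0)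
      simp at this
    have h := hB'pd.dotProduct_mulVec_pos hz
    have hU1 : U *ᵥ (fun _ => (1 : ℝ)) = u := by
      funext i; simp [hUdef, mulVec, dotProduct]
    have hUtp : Uᵀ *ᵥ (-p) = fun _ : Fin 1 => -d := by
      rw [Matrix.mulVec_neg]
      funext t
      simp only [Pi.neg_apply, mulVec, dotProduct, Matrix.transpose_apply, hUdef,
        Matrix.of_apply]
      rw [hd']
    have hCb1 : Cb *ᵥ (fun _ => (1 : ℝ)) = fun _ : Fin 1 => c + σ2 := by
      funext t; simp [hCbdef, mulVec, dotProduct]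
    have hform : star (Sum.elim (-p) (fun _ => (1 : ℝ)))
        ⬝ᵥ (B' *ᵥ Sum.elim (-p) (fun _ => (1 : ℝ))) = s := by
      rw [hB'def, fromBlocks_mulVec]
      simp only [Sum.elim_comp_inl, Sum.elim_comp_inr, Function.star_sumElim, star_trivial]
      rw [Matrix.mulVec_neg, hAp, hU1, hUtp, hCb1, sumElim_dotProduct_sumElim]
      have h1 : (-u + u : Fin n → ℝ) = 0 := by simp
      rw [h1, dotProduct_zero]
      simp [dotProduct, Fin.sum_univ_one, hsdef]
      ring
    rw [hB'def] at h
    rw [← hform]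
    exact h
  have hs0 : s ≠ 0 := hs_pos.ne'
  have hsinv : s⁻¹ * s = 1 := inv_mul_cancel₀ hs0
  -- the explicit inverse of B'
  set Q : Matrix (Fin n) (Fin n) ℝ := Matrix.of fun i j => s⁻¹ * p i * p j with hQdef
  set R : Matrix (Fin n) (Fin 1) ℝ := Matrix.of fun i _ => -(s⁻¹ * p i) with hRdef
  set S' : Matrix (Fin 1) (Fin 1) ℝ := Matrix.of fun _ _ => s⁻¹ with hS'def
  set M : Matrix (Fin n ⊕ Fin 1) (Fin n ⊕ Fin 1) ℝ := fromBlocks (P + Q) R Rᵀ S' with hMdef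
  have hMinv : B'⁻¹ = M := by
    apply inv_eq_right_inv
    rw [hB'def, hMdef, fromBlocks_multiply, ← fromBlocks_one]
    have hTL : A * (P + Q) + U * Rᵀ = 1 := by
      ext i j
      simp only [Matrix.add_apply, Matrix.mul_apply, Matrix.of_apply, hQdef, hRdef, hUdef,
        Matrix.transpose_apply, Fin.sum_univ_one]
      have h2 : (∑ k, A i k * (P k j + s⁻¹ * p k * p j))
          = (∑ k, A i k * P k j) + s⁻¹ * p j * ∑ k, A i k * p k := by
        rw [Finset.mul_sum, ← Finset.sum_add_distrib]
        exact Finset.sum_congr rfl fun k _ => by ring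
      rw [h2, hAPe, hApe]
      ring
    have hTR : A * R + U * S' = 0 := by
      ext i t
      simp only [Matrix.add_apply, Matrix.mul_apply, Matrix.of_apply, hRdef, hUdef, hS'def,
        Fin.sum_univ_one, Matrix.zero_apply]
      have h2 : (∑ k, A i k * -(s⁻¹ * p k)) = -(s⁻¹ * ∑ k, A i k * p k) := by
        rw [Finset.mul_sum, ← Finset.sum_neg_distrib]
        exact Finset.sum_congr rfl fun k _ => by ring
      rw [h2, hApe]
      ring
    have hBL : Uᵀ * (P + Q) + Cb * Rᵀ = 0 := by
      ext t j
      simp only [Matrix.add_apply, Matrix.mul_apply, Matrix.of_apply, hQdef, hRdef, hUdef,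
        hCbdef, Matrix.transpose_apply, Fin.sum_univ_one, Matrix.zero_apply]
      have h2 : (∑ k, u k * (P k j + s⁻¹ * p k * p j))
          = (∑ k, u k * P k j) + s⁻¹ * p j * ∑ k, u k * p k := by
        rw [Finset.mul_sum, ← Finset.sum_add_distrib]
        exact Finset.sum_congr rfl fun k _ => by ring
      rw [h2, hPue, hd']
      linear_combination (-(p j)) * hsinv + (s⁻¹ * p j) * hsdef
    have hBR : Uᵀ * R + Cb * S' = 1 := by
      ext t t'
      simp only [Matrix.add_apply, Matrix.mul_apply, Matrix.of_apply, hRdef, hUdef, hCbdef,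
        hS'def, Matrix.transpose_apply, Fin.sum_univ_one]
      have h2 : (∑ k, u k * -(s⁻¹ * p k)) = -(s⁻¹ * ∑ k, u k * p k) := by
        rw [Finset.mul_sum, ← Finset.sum_neg_distrib]
        exact Finset.sum_congr rfl fun k _ => by ring
      rw [h2, hd', Matrix.one_apply, if_pos (Subsingleton.elim t t')]
      linear_combination hsinv - s⁻¹ * hsdef
    rw [hTL, hTR, hBL, hBR]
  -- the quadratic form at step n+1
  set w : Fin (n + 1) → ℝ := kerVec κ xs (n + 1) y with hwdef
  have hwe : w ∘ e = Sum.elim v (fun _ => α) := by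
    funext i
    rcases i with i | t
    · simp [hwdef, kerVec, hvdef, hval]
    · simp [hwdef, kerVec, hαdef, hvalr]
  have hB : B = B'.submatrix e.symm e.symm := by
    rw [← hBe]
    ext i j
    simp [Matrix.submatrix_apply]
  have hBinv : B⁻¹ = M.submatrix e.symm e.symm := by
    rw [hB, Matrix.inv_submatrix_equiv, hMinv]
  have hdot : ∀ (a : Fin (n + 1) → ℝ) (b : Fin n ⊕ Fin 1 → ℝ),
      a ⬝ᵥ (b ∘ e.symm) = (a ∘ e) ⬝ᵥ b := by
    intro a b
    exact Fintype.sum_equiv e.symm _ _ (fun i => by simp)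
  have hQv : Q *ᵥ v = fun i => s⁻¹ * q * p i := by
    funext i
    simp only [mulVec, dotProduct, hQdef, Matrix.of_apply]
    calc (∑ j, s⁻¹ * p i * p j * v j)
        = ∑ j, (s⁻¹ * p i) * (p j * v j) := Finset.sum_congr rfl fun j _ => by ring
      _ = (s⁻¹ * p i) * ∑ j, p j * v j := (Finset.mul_sum _ _ _).symm
      _ = s⁻¹ * q * p i := by rw [hpv']; ring
  have hRa : R *ᵥ (fun _ => α) = fun i => -(s⁻¹ * α * p i) := by
    funext i
    simp only [mulVec, dotProduct, hRdef, Matrix.of_apply, Fin.sum_univ_one]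
    ring
  have hRtv : Rᵀ *ᵥ v = fun _ : Fin 1 => -(s⁻¹ * q) := by
    funext t
    simp only [mulVec, dotProduct, hRdef, Matrix.of_apply, Matrix.transpose_apply]
    calc (∑ i, -(s⁻¹ * p i) * v i)
        = ∑ i, -(s⁻¹ * (p i * v i)) := Finset.sum_congr rfl fun i _ => by ring
      _ = -(s⁻¹ * ∑ i, p i * v i) := by rw [Finset.sum_neg_distrib, Finset.mul_sum]
      _ = -(s⁻¹ * q) := by rw [hpv']
  have hS'a : S' *ᵥ (fun _ => α) = fun _ : Fin 1 => s⁻¹ * α := by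
    funext t
    simp [hS'def, mulVec, dotProduct]
  have hvp : v ⬝ᵥ p = q := by rw [dotProduct_comm]; exact hpv
  have key : (Sum.elim v (fun _ => α)) ⬝ᵥ (M *ᵥ Sum.elim v (fun _ => α))
      = v ⬝ᵥ (P *ᵥ v) + (α - q) ^ 2 / s := by
    rw [hMdef, fromBlocks_mulVec]
    simp only [Sum.elim_comp_inl, Sum.elim_comp_inr]
    rw [sumElim_dotProduct_sumElim, Matrix.add_mulVec, hQv, hRa, hRtv, hS'a]
    have h1 : v ⬝ᵥ ((fun i => s⁻¹ * q * p i) : Fin n → ℝ) = s⁻¹ * q * q := by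
      calc v ⬝ᵥ ((fun i => s⁻¹ * q * p i) : Fin n → ℝ)
          = ∑ i, (s⁻¹ * q) * (v i * p i) := Finset.sum_congr rfl fun i _ => by ring
        _ = (s⁻¹ * q) * ∑ i, v i * p i := (Finset.mul_sum _ _ _).symm
        _ = s⁻¹ * q * q := by rw [show (∑ i, v i * p i) = q from hvp]
    have h2 : v ⬝ᵥ ((fun i => -(s⁻¹ * α * p i)) : Fin n → ℝ) = -(s⁻¹ * α * q) := by
      calc v ⬝ᵥ ((fun i => -(s⁻¹ * α * p i)) : Fin n → ℝ)
          = ∑ i, -((s⁻¹ * α) * (v i * p i)) := Finset.sum_congr rfl fun i _ => by ring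
        _ = -((s⁻¹ * α) * ∑ i, v i * p i) := by
            rw [Finset.sum_neg_distrib, Finset.mul_sum]
        _ = -(s⁻¹ * α * q) := by rw [show (∑ i, v i * p i) = q from hvp]
    rw [dotProduct_add, dotProduct_add, h1, h2]
    have h3 : ((fun _ => α) : Fin 1 → ℝ) ⬝ᵥ
        ((fun _ => -(s⁻¹ * q)) + fun _ => s⁻¹ * α) = α * (-(s⁻¹ * q) + s⁻¹ * α) := by
      simp [dotProduct, Fin.sum_univ_one]
    rw [h3]
    field_simp
    ring
  constructor
  · rw [hpostn]; exact hs_pos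
  · have hfinal : postVar κ xs σ2 (n + 1) y
        = κ y y - (v ⬝ᵥ (P *ᵥ v) + (α - q) ^ 2 / s) := by
      simp only [postVar, ← hBdef, ← hwdef]
      rw [hBinv]
      rw [Matrix.submatrix_mulVec_equiv]
      simp only [Equiv.symm_symm]
      rw [hdot, hwe, key]
    rw [hfinal, hpostn]
    simp only [postVar, ← hAdef, ← hPdef, ← hvdef, ← hudef, ← hqdef, ← hαdef]
    ring
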